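/- If β > 2, then the equation w = 1/(1 + exp(β − 2βw)) has exactly one solution w in the interval [0, 1/2), in addition to the solution w = 1/2. -/

import Mathlib

open Real Set Filter

private lemma g_hasDerivAt (β w : ℝ) :
    HasDerivAt (fun w => w - 1/(1 + Real.exp (β - 2 * β * w)))
      (1 - 2*β*Real.exp (β - 2*β*w)/(1 + Real.exp (β - 2*β*w))^2) w := by
  have hpos : (0:ℝ) < 1 + Real.exp (β - 2*β*w) := by positivity
  have h0 : HasDerivAt (fun w : ℝ => β - 2*β*w) (-(2*β)) w := by
    have h := (hasDerivAt_const w β).sub ((hasDerivAt_id w).const_mul (2*β))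
    simp at h
    exact h
  have hE : HasDerivAt (fun w => Real.exp (β - 2*β*w)) (Real.exp (β - 2*β*w) * (-(2*β))) w :=
    (Real.hasDerivAt_exp _).comp w h0
  have h1 : HasDerivAt (fun w => 1 + Real.exp (β - 2*β*w)) (Real.exp (β - 2*β*w) * (-(2*β))) w :=
    hE.const_add 1
  have h2 := h1.inv (ne_of_gt hpos)
  have h3 := (hasDerivAt_id w).sub h2
  have heq : 1 - 2*β*Real.exp (β - 2*β*w)/(1 + Real.exp (β - 2*β*w))^2
      = 1 - -(Real.exp (β - 2*β*w) * (-(2*β))) / (1 + Real.exp (β - 2*β*w))^2 := by ring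
  rw [heq]
  simp only [one_div]
  exact h3

private lemma D_strictAnti (β : ℝ) (hβ : 2 < β) :
    StrictAntiOn (fun w => 1 - 2*β*Real.exp (β - 2*β*w)/(1 + Real.exp (β - 2*β*w))^2)
      (Icc (0:ℝ) (1/2)) := by
  intro x hx y hy hxy
  simp only
  set a := Real.exp (β - 2*β*x) with ha
  set b := Real.exp (β - 2*β*y) with hb
  have ha0 : 0 < a := Real.exp_pos _
  have hb1 : 1 ≤ b := by
    rw [hb]
    have : (0:ℝ) ≤ β - 2*β*y := by nlinarith [hy.2]
    simpa using Real.one_le_exp this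
  have hab : b < a := by
    rw [ha, hb]
    apply Real.exp_lt_exp.2
    nlinarith
  have key : a/(1+a)^2 < b/(1+b)^2 := by
    rw [div_lt_div_iff₀ (by positivity) (by positivity)]
    nlinarith [mul_pos (sub_pos.2 hab) (show (0:ℝ) < a*b - 1 by nlinarith)]
  have h2β : (0:ℝ) < 2*β := by linarith
  have := mul_lt_mul_of_pos_left key h2β
  rw [mul_div_assoc, mul_div_assoc]
  linarith

theorem fixed_point_exists_unique_of_beta_gt_two (β : ℝ) (hβ : 2 < β) :
    ((1/2 : ℝ) = 1 / (1 + Real.exp (β - 2 * β * (1/2)))) ∧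
      ∃! w : ℝ, w ∈ Set.Ico (0:ℝ) (1/2) ∧ w = 1 / (1 + Real.exp (β - 2 * β * w)) := by
  set g : ℝ → ℝ := fun w => w - 1/(1 + Real.exp (β - 2 * β * w)) with hgdef
  have hza : β - 2*β*(1/2:ℝ) = 0 := by ring
  have half : (1/2 : ℝ) = 1 / (1 + Real.exp (β - 2 * β * (1/2))) := by
    rw [hza, Real.exp_zero]; norm_num
  have ghalf : g (1/2) = 0 := by
    simp only [hgdef]
    linarith [half]
  have hdiff : ∀ x : ℝ, DifferentiableAt ℝ g x := fun x => (g_hasDerivAt β x).differentiableAt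
  have hdiff' : Differentiable ℝ g := fun x => hdiff x
  have hcont : Continuous g := hdiff'.continuous
  -- derivative at 1/2 is negative
  have hd := g_hasDerivAt β (1/2)
  have hL : (1 - 2*β*Real.exp (β - 2*β*(1/2))/(1 + Real.exp (β - 2*β*(1/2)))^2) < 0 := by
    rw [hza, Real.exp_zero]
    norm_num
    linarith
  rw [hasDerivAt_iff_tendsto_slope] at hd
  have hev : ∀ᶠ t in nhdsWithin (1/2:ℝ) {(1/2:ℝ)}ᶜ, slope g (1/2) t < 0 :=
    hd.eventually_lt_const hL
  have hle : nhdsWithin (1/2:ℝ) (Iio (1/2)) ≤ nhdsWithin (1/2:ℝ) {(1/2:ℝ)}ᶜ :=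
    nhdsWithin_mono _ (fun x hx => ne_of_lt hx)
  have hev' : ∀ᶠ t in nhdsWithin (1/2:ℝ) (Iio (1/2)), slope g (1/2) t < 0 := hev.filter_mono hle
  have hIoo : Ioo (0:ℝ) (1/2) ∈ nhdsWithin (1/2:ℝ) (Iio (1/2)) :=
    Ioo_mem_nhdsLT_of_mem (by norm_num)
  obtain ⟨t, hts, htI⟩ := (hev'.and (eventually_of_mem hIoo (fun x hx => hx))).exists
  -- g t > 0
  have hgt : 0 < g t := by
    rw [slope_def_field] at hts
    rw [ghalf] at hts
    have hden : t - 1/2 < 0 := by linarith [htI.2]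
    rcases div_neg_iff.1 hts with h | h
    · linarith [h.1]
    · linarith [h.2]
  have hg0 : g 0 < 0 := by
    have : (0:ℝ) < 1/(1 + Real.exp (β - 2*β*0)) := by positivity
    simp only [hgdef]
    linarith
  -- IVT on [0, t]
  obtain ⟨c, hcmem, hgc⟩ := intermediate_value_Icc (le_of_lt htI.1) hcont.continuousOn
    (Set.mem_Icc.2 ⟨le_of_lt hg0, le_of_lt hgt⟩)
  have hclt : c < 1/2 := lt_of_le_of_lt hcmem.2 htI.2
  have hcfix : c = 1 / (1 + Real.exp (β - 2 * β * c)) := by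
    have : c - 1/(1 + Real.exp (β - 2*β*c)) = 0 := hgc
    linarith
  -- uniqueness: two zeros below 1/2 plus the zero at 1/2 contradict Rolle + strict anti deriv
  have key : ∀ a b : ℝ, a ∈ Ico (0:ℝ) (1/2) → b ∈ Ico (0:ℝ) (1/2) →
      g a = 0 → g b = 0 → a < b → False := by
    intro a b ha hb hga hgb hab
    obtain ⟨c1, hc1, hD1⟩ := exists_hasDerivAt_eq_zero hab hcont.continuousOn
      (hga.trans hgb.symm) (fun x _ => g_hasDerivAt β x)
    obtain ⟨c2, hc2, hD2⟩ := exists_hasDerivAt_eq_zero hb.2 hcont.continuousOn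
      (hgb.trans ghalf.symm) (fun x _ => g_hasDerivAt β x)
    have hm1 : c1 ∈ Icc (0:ℝ) (1/2) := ⟨le_of_lt (lt_of_le_of_lt ha.1 hc1.1),
      le_of_lt (hc1.2.trans hb.2)⟩
    have hm2 : c2 ∈ Icc (0:ℝ) (1/2) := ⟨le_of_lt (lt_of_le_of_lt hb.1 hc2.1),
      le_of_lt hc2.2⟩
    have h12 : c1 < c2 := lt_trans hc1.2 hc2.1
    have := D_strictAnti β hβ hm1 hm2 h12
    simp only at this
    rw [hD1, hD2] at this
    exact lt_irrefl 0 this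
  refine ⟨half, c, ⟨⟨⟨hcmem.1, hclt⟩, hcfix⟩, ?_⟩⟩
  rintro y ⟨hy, hyfix⟩
  have hgy : g y = 0 := by
    simp only [hgdef]
    linarith [hyfix]
  by_contra hne
  rcases lt_or_gt_of_ne hne with h | h
  · exact key y c hy ⟨hcmem.1, hclt⟩ hgy hgc h
  · exact key c y ⟨hcmem.1, hclt⟩ hy hgc hgy h
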